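/- Let y ∈ ℝ^J satisfy the Queyranne inequalities (Q). If there exist i, j ∈ J with i ≠ j such that y_j < y_i + p_j and y_j ≥ p(J), then there exists ε > 0 such that the vector y − (ε/p_j)·1_j also satisfies the inequalities (Q) (here 1_j denotes the vector in ℝ^J with value 1 at coordinate j and 0 elsewhere). -/
import Mathlib


/-- `g_p(S) = ½(∑_{j∈S} p_j)² + ½ ∑_{j∈S} p_j²`. -/
noncomputable def gp {J : Type*} (p : J → ℝ) (S : Finset J) : ℝ :=
  (∑ j ∈ S, p j) ^ 2 / 2 + (∑ j ∈ S, (p j) ^ 2) / 2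

/-- The vector `1_k ∈ ℝ^J` with value `1` at coordinate `k` and `0` elsewhere. -/
def ind {J : Type*} [DecidableEq J] (k : J) : J → ℝ := fun l => if l = k then 1 else 0

lemma strict_slack {J : Type*} [Fintype J] [DecidableEq J] (p y : J → ℝ)
    (hp : ∀ j, 0 < p j)
    (hQ : ∀ S : Finset J, ∑ k ∈ S, p k * y k ≥ gp p S)
    (i j : J) (hne : i ≠ j) (h₁ : y j < y i + p j) (h₂ : y j ≥ ∑ k, p k)
    (S : Finset J) (hjS : j ∈ S) : ∑ k ∈ S, p k * y k > gp p S := by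
  have hpnn : ∀ k ∈ Finset.univ, (0:ℝ) ≤ p k := fun k _ => (hp k).le
  have hPS : ∑ k ∈ S, p k ≤ ∑ k, p k :=
    Finset.sum_le_sum_of_subset_of_nonneg (Finset.subset_univ S) (fun k _ _ => (hp k).le)
  by_cases hiS : i ∈ S
  · -- S'' = (S.erase j).erase i
    have hiS' : i ∈ S.erase j := Finset.mem_erase.mpr ⟨hne, hiS⟩
    set T := (S.erase j).erase i with hT
    have e1 : ∀ f : J → ℝ, ∑ k ∈ S, f k = f i + f j + ∑ k ∈ T, f k := by
      intro f
      rw [← Finset.add_sum_erase _ f hjS, ← Finset.add_sum_erase _ f hiS']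
      ring
    have hQT := hQ T
    have hyi : y i > (∑ k, p k) - p j := by linarith
    have hPT : ∑ k ∈ T, p k = (∑ k ∈ S, p k) - p i - p j := by
      rw [e1]; ring
    have hgp : gp p S = gp p T + (p i + p j) * (∑ k ∈ S, p k) - p i * p j := by
      simp only [gp]
      rw [e1 p, e1 (fun k => p k ^ 2)]
      ring
    have hsum : ∑ k ∈ S, p k * y k = p i * y i + p j * y j + ∑ k ∈ T, p k * y k :=
      e1 (fun k => p k * y k)
    have hpi := hp i
    have hpj := hp j
    nlinarith [mul_lt_mul_of_pos_left hyi (hp i), mul_le_mul_of_nonneg_left h₂ (hp j).le,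
      mul_le_mul_of_nonneg_left hPS (hp i).le, mul_le_mul_of_nonneg_left hPS (hp j).le]
  · set T := S.erase j with hT
    have e1 : ∀ f : J → ℝ, ∑ k ∈ S, f k = f j + ∑ k ∈ T, f k := by
      intro f; rw [← Finset.add_sum_erase _ f hjS]
    have hQT := hQ T
    have hPTlt : (∑ k ∈ T, p k) + p j < ∑ k, p k := by
      have : (∑ k ∈ S, p k) + p i ≤ ∑ k, p k := by
        have : ∑ k ∈ insert i S, p k ≤ ∑ k, p k :=
          Finset.sum_le_sum_of_subset_of_nonneg (Finset.subset_univ _) (fun k _ _ => (hp k).le)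
        rwa [Finset.sum_insert hiS, add_comm] at this
      have e := e1 p
      have := hp i
      linarith
    have hgp : gp p S = gp p T + p j * (∑ k ∈ T, p k) + p j ^ 2 := by
      simp only [gp]; rw [e1 p, e1 (fun k => p k ^ 2)]; ring
    have hsum : ∑ k ∈ S, p k * y k = p j * y j + ∑ k ∈ T, p k * y k :=
      e1 (fun k => p k * y k)
    have hpj := hp j
    nlinarith [mul_le_mul_of_nonneg_left h₂ (hp j).le,
      mul_lt_mul_of_pos_left hPTlt (hp j)]

/-- If `y` satisfies (Q), and `i ≠ j` are such that `y_j < y_i + p_j`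
and `y_j ≥ p(J)`, then there is `ε > 0` such that `y − (ε/p_j)·1_j` also satisfies (Q). -/
theorem stmt_3 {J : Type*} [Fintype J] [DecidableEq J] (p y : J → ℝ)
    (hp : ∀ j, 0 < p j)
    (hQ : ∀ S : Finset J, ∑ k ∈ S, p k * y k ≥ gp p S)
    (i j : J) (hne : i ≠ j) (h₁ : y j < y i + p j) (h₂ : y j ≥ ∑ k, p k) :
    ∃ ε : ℝ, 0 < ε ∧
      ∀ S : Finset J, ∑ k ∈ S, p k * (y k - (ε / p j) * ind j k) ≥ gp p S := by
  classical
  set F : Finset (Finset J) := Finset.univ.filter (fun S => j ∈ S) with hF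
  have hFne : F.Nonempty := ⟨{j}, by simp [hF]⟩
  set ε : ℝ := F.inf' hFne (fun S => ∑ k ∈ S, p k * y k - gp p S) with hε
  have hεpos : 0 < ε := by
    rw [hε]
    apply Finset.lt_inf'_iff .. |>.mpr
    intro S hS
    have hjS : j ∈ S := (Finset.mem_filter.mp hS).2
    have := strict_slack p y hp hQ i j hne h₁ h₂ S hjS
    linarith
  refine ⟨ε, hεpos, fun S => ?_⟩
  have key : ∑ k ∈ S, p k * (y k - (ε / p j) * ind j k)
      = (∑ k ∈ S, p k * y k) - (if j ∈ S then ε else 0) := by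
    simp only [mul_sub]
    rw [Finset.sum_sub_distrib]
    congr 1
    simp only [ind, mul_ite, mul_one, mul_zero]
    rw [Finset.sum_ite_eq' S j (fun k => p k * (ε / p j))]
    by_cases hjS : j ∈ S
    · simp only [hjS, if_true]
      field_simp [(hp j).ne']
    · simp [hjS]
  rw [key]
  by_cases hjS : j ∈ S
  · simp only [hjS, if_true]
    have hmem : S ∈ F := Finset.mem_filter.mpr ⟨Finset.mem_univ S, hjS⟩
    have : ε ≤ ∑ k ∈ S, p k * y k - gp p S := Finset.inf'_le _ hmem
    linarith
  · simp only [hjS, if_false, sub_zero]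
    exact hQ S
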